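/- If a random variable f satisfies ‖f‖_{Gψ} ≤ 1 in the Grand Lebesgue space, i.e. (E|f|^p)^{1/p} ≤ ψ(p) for all p in the support of ψ, then its tail satisfies T_f(u) := max(P(f > u), P(f < −u)) ≤ exp( −ψ̃*(ln u) ) for u > e, where ψ̃(p) = p ln ψ(p) and ψ̃* is its Legendre transform ψ̃*(y) = sup_p (p|y| − ψ̃(p)). -/

import Mathlib

open MeasureTheory Set ENNReal

/-- if `(E|f|^p)^{1/p} ≤ ψ(p)` for all `p` in the support `(1,B)` of `ψ`,
then `T_f(u) = max(P(f > u), P(f < −u)) ≤ exp(−ψ̃*(ln u))` for `u > e`, where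
`ψ̃(p) = p ln ψ(p)` and `ψ̃*(y) = sup_{p ∈ (1,B)} (p|y| − ψ̃(p))`. -/
theorem stmt9 {Ω : Type*} [MeasurableSpace Ω] (P : Measure Ω) [IsProbabilityMeasure P]
    (f : Ω → ℝ) (hf : Measurable f)
    (B : ℝ≥0∞) (hB : 1 < B)
    (S : Set ℝ) (hS : S = {p : ℝ | 1 < p ∧ ENNReal.ofReal p < B})
    (ψ : ℝ → ℝ) (hψcont : ContinuousOn ψ S)
    (hψpos : ∃ c : ℝ, 0 < c ∧ ∀ p ∈ S, c ≤ ψ p)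
    (hmom : ∀ p ∈ S,
      (∫⁻ ω, (ENNReal.ofReal |f ω|) ^ p ∂P) ^ (1 / p) ≤ ENNReal.ofReal (ψ p)) :
    ∀ u : ℝ, Real.exp 1 < u →
      max (P {ω | f ω > u}) (P {ω | f ω < -u})
        ≤ ENNReal.ofReal (Real.exp
            (-(sSup {x : ℝ | ∃ p ∈ S, x = p * |Real.log u| - p * Real.log (ψ p)}))) := by
  obtain ⟨c, hc, hψc⟩ := hψpos
  intro u hu
  have he1 : (1:ℝ) < Real.exp 1 := by
    have := Real.add_one_le_exp 1; linarith
  have hu1 : (1:ℝ) < u := he1.trans hu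
  have hu0 : (0:ℝ) < u := lt_trans one_pos hu1
  have hlogu : (1:ℝ) < Real.log u := by
    have := Real.log_lt_log (Real.exp_pos 1) hu
    rwa [Real.log_exp] at this
  have habs : |Real.log u| = Real.log u := abs_of_pos (lt_trans one_pos hlogu)
  set A : Set Ω := {ω | u ≤ |f ω|} with hA
  have hmax : max (P {ω | f ω > u}) (P {ω | f ω < -u}) ≤ P A := by
    have h1 : {ω | f ω > u} ⊆ A := fun ω (hω : f ω > u) => le_trans hω.le (le_abs_self _)
    have h2 : {ω | f ω < -u} ⊆ A := fun ω (hω : f ω < -u) => by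
      have hlt : u < -f ω := by linarith
      exact hlt.le.trans (neg_le_abs _)
    exact max_le (measure_mono h1) (measure_mono h2)
  refine hmax.trans ?_
  have key : ∀ p ∈ S, P A ≤
      ENNReal.ofReal (Real.exp (-(p * |Real.log u| - p * Real.log (ψ p)))) := by
    intro p hp
    have hp' := hp
    rw [hS] at hp'
    obtain ⟨hp1, hpB⟩ := hp'
    have hp0 : (0:ℝ) < p := lt_trans one_pos hp1
    have hψp : (0:ℝ) < ψ p := lt_of_lt_of_le hc (hψc p hp)
    have hint : ∫⁻ ω, (ENNReal.ofReal |f ω|) ^ p ∂P ≤ (ENNReal.ofReal (ψ p)) ^ p := by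
      have h2 := ENNReal.rpow_le_rpow (hmom p hp) hp0.le
      rwa [← ENNReal.rpow_mul, one_div, inv_mul_cancel₀ hp0.ne', ENNReal.rpow_one] at h2
    have hmeas : AEMeasurable (fun ω => (ENNReal.ofReal |f ω|) ^ p) P := by
      exact (hf.abs.ennreal_ofReal.pow_const p).aemeasurable
    have markov := mul_meas_ge_le_lintegral₀ hmeas ((ENNReal.ofReal u) ^ p)
    have hsubset : A ⊆ {ω | (ENNReal.ofReal u) ^ p ≤ (ENNReal.ofReal |f ω|) ^ p} := by
      intro ω hω
      exact ENNReal.rpow_le_rpow (ENNReal.ofReal_le_ofReal hω) hp0.le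
    have h3 : (ENNReal.ofReal u) ^ p * P A ≤ (ENNReal.ofReal (ψ p)) ^ p :=
      le_trans (mul_le_mul_right (measure_mono hsubset) _) (le_trans markov hint)
    have hune : (ENNReal.ofReal u) ^ p ≠ 0 := by
      simp [ENNReal.rpow_eq_zero_iff, ENNReal.ofReal_eq_zero, not_le.mpr hu0, hp0.ne',
        ENNReal.ofReal_ne_top]
    have hunt : (ENNReal.ofReal u) ^ p ≠ ∞ := by
      exact ENNReal.rpow_ne_top_of_nonneg hp0.le ENNReal.ofReal_ne_top
    have h4 : P A ≤ (ENNReal.ofReal (ψ p)) ^ p / (ENNReal.ofReal u) ^ p := by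
      rw [ENNReal.le_div_iff_mul_le (Or.inl hune) (Or.inl hunt), mul_comm]
      exact h3
    refine h4.trans (le_of_eq ?_)
    rw [ENNReal.ofReal_rpow_of_pos hψp, ENNReal.ofReal_rpow_of_pos hu0,
      ← ENNReal.ofReal_div_of_pos (Real.rpow_pos_of_pos hu0 p)]
    congr 1
    rw [Real.rpow_def_of_pos hψp, Real.rpow_def_of_pos hu0, ← Real.exp_sub, habs]
    ring_nf
  rcases eq_or_ne (P A) 0 with h0 | h0
  · rw [h0]; exact zero_le
  · set t : ℝ := (P A).toReal with ht
    have hAnt : P A ≠ ∞ := measure_ne_top P A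
    have ht0 : 0 < t := ENNReal.toReal_pos h0 hAnt
    have ht1 : t ≤ 1 := by
      have : P A ≤ 1 := prob_le_one
      simpa [ht] using ENNReal.toReal_mono ENNReal.one_ne_top this
    have hsup : sSup {x : ℝ | ∃ p ∈ S, x = p * |Real.log u| - p * Real.log (ψ p)}
        ≤ -Real.log t := by
      refine Real.sSup_le ?_ (by simpa using Real.log_nonpos ht0.le ht1)
      rintro x ⟨p, hp, rfl⟩
      have h5 := key p hp
      have h6 : t ≤ Real.exp (-(p * |Real.log u| - p * Real.log (ψ p))) :=
        ENNReal.toReal_le_of_le_ofReal (Real.exp_nonneg _) h5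
      have h7 := Real.log_le_log ht0 h6
      rw [Real.log_exp] at h7
      linarith
    have h8 : t ≤ Real.exp (-(sSup {x : ℝ | ∃ p ∈ S,
        x = p * |Real.log u| - p * Real.log (ψ p)})) := by
      calc t = Real.exp (Real.log t) := (Real.exp_log ht0).symm
        _ ≤ _ := Real.exp_le_exp.mpr (by linarith)
    calc P A = ENNReal.ofReal t := (ENNReal.ofReal_toReal hAnt).symm
      _ ≤ _ := ENNReal.ofReal_le_ofReal h8
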